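/- If D is a family of tall summable ideals with |D| < 𝔟 (the bounding number), then there exists a tall summable ideal I_g such that I_g ⊆ I_h for every I_h ∈ D. -/

import Mathlib

open Set Filter

/-- The summable ideal determined by `g`. -/
def Ig (g : ℕ → ℝ) : Set (Set ℕ) := {A | Summable (A.indicator g)}

/-- `g` determines a tall summable ideal: positive, divergent series, tends to `0`. -/
def SummableTall (g : ℕ → ℝ) : Prop :=
  (∀ n, 0 < g n) ∧ ¬ Summable g ∧ Tendsto g atTop (nhds 0)

/-- The bounding number 𝔟. -/
noncomputable def bddNum : Cardinal :=
  sInf {c | ∃ F : Set (ℕ → ℕ), Cardinal.mk ↥F = c ∧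
    ∀ g : ℕ → ℕ, ∃ f ∈ F, ¬ ∀ᶠ n in atTop, f n ≤ g n}

/-- Any family of size `< bddNum` is bounded. -/
lemma bounded_of_lt_bddNum {ι : Type} (F : ι → ℕ → ℕ)
    (h : Cardinal.mk ι < bddNum) :
    ∃ φ : ℕ → ℕ, ∀ i, ∀ᶠ n in atTop, F i n ≤ φ n := by
  by_contra hc
  push_neg at hc
  have h1 : bddNum ≤ Cardinal.mk ↥(Set.range F) := by
    apply csInf_le'
    refine ⟨Set.range F, rfl, fun g => ?_⟩
    obtain ⟨i, hi⟩ := hc g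
    exact ⟨F i, ⟨i, rfl⟩, by rw [Filter.not_eventually]; exact hi.mono fun n hn => not_le.mpr hn⟩
  exact absurd ((h1.trans Cardinal.mk_range_le).trans_lt h) (lt_irrefl _)

/-- The modified scale. -/
def psiAux (φ : ℕ → ℕ) : ℕ → ℕ
  | 0 => φ 0
  | k + 1 => max (φ (k + 1)) (psiAux φ k + 2 ^ k)

lemma psiAux_ge (φ : ℕ → ℕ) : ∀ k, φ k ≤ psiAux φ k
  | 0 => le_refl _
  | k + 1 => le_max_left _ _

lemma psiAux_gap (φ : ℕ → ℕ) (k : ℕ) : psiAux φ k + 2 ^ k ≤ psiAux φ (k + 1) :=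
  le_max_right _ _

lemma psiAux_strictMono (φ : ℕ → ℕ) : StrictMono (psiAux φ) :=
  strictMono_nat_of_lt_succ fun k => by
    have h1 := Nat.one_le_two_pow (n := k)
    have h2 := psiAux_gap φ k
    omega

/-- block index -/
def Kf (ψ : ℕ → ℕ) (n : ℕ) : ℕ := Nat.findGreatest (fun k => ψ k ≤ n) n

noncomputable def gf (ψ : ℕ → ℕ) (n : ℕ) : ℝ := (1 / 2) ^ (Kf ψ n)

section KfLemmas

variable {ψ : ℕ → ℕ}

lemma le_Kf (hm : StrictMono ψ) {k n : ℕ} (h : ψ k ≤ n) : k ≤ Kf ψ n :=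
  Nat.le_findGreatest (le_trans (hm.le_apply) h) h

lemma Kf_spec (hm : StrictMono ψ) {n : ℕ} (h : ψ 0 ≤ n) : ψ (Kf ψ n) ≤ n := by
  by_cases h0 : Kf ψ n = 0
  · rwa [h0]
  · exact Nat.findGreatest_spec (P := fun k => ψ k ≤ n) (Nat.zero_le n) h

lemma Kf_eq (hm : StrictMono ψ) {k n : ℕ} (h1 : ψ k ≤ n) (h2 : n < ψ (k + 1)) : Kf ψ n = k := by
  have hle : k ≤ Kf ψ n := le_Kf hm h1
  have hsp : ψ (Kf ψ n) ≤ n := Kf_spec hm (le_trans (hm.monotone (Nat.zero_le k)) h1)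
  have : Kf ψ n < k + 1 := hm.lt_iff_lt.mp (lt_of_le_of_lt hsp h2)
  omega

lemma gf_pos (n : ℕ) : 0 < gf ψ n := by unfold gf; positivity

/-- `gf` tends to `0`. -/
lemma gf_tendsto (hm : StrictMono ψ) : Tendsto (gf ψ) atTop (nhds 0) := by
  have hK : Tendsto (Kf ψ) atTop atTop := by
    refine tendsto_atTop.2 fun b => eventually_atTop.2 ⟨ψ b, fun n hn => le_Kf hm hn⟩
  have : Tendsto (fun m : ℕ => ((1 : ℝ) / 2) ^ m) atTop (nhds 0) :=
    tendsto_pow_atTop_nhds_zero_of_lt_one (by norm_num) (by norm_num)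
  exact this.comp hK

/-- block sum lower bound -/
lemma gf_block_sum (hm : StrictMono ψ) (hgap : ∀ k, ψ k + 2 ^ k ≤ ψ (k + 1)) (k : ℕ) :
    (1 : ℝ) ≤ ∑ n ∈ Finset.Ico (ψ k) (ψ (k + 1)), gf ψ n := by
  have hconst : ∀ n ∈ Finset.Ico (ψ k) (ψ (k + 1)), gf ψ n = (1 / 2 : ℝ) ^ k := by
    intro n hn
    rw [Finset.mem_Ico] at hn
    unfold gf
    rw [Kf_eq hm hn.1 hn.2]
  rw [Finset.sum_congr rfl hconst, Finset.sum_const, Nat.card_Ico, nsmul_eq_mul]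
  have hc : (2 : ℝ) ^ k ≤ ((ψ (k + 1) - ψ k : ℕ) : ℝ) := by
    have : 2 ^ k ≤ ψ (k + 1) - ψ k := by have := hgap k; omega
    exact_mod_cast this
  calc (1 : ℝ) = (2 : ℝ) ^ k * (1 / 2) ^ k := by
        rw [← mul_pow]; norm_num
    _ ≤ ((ψ (k + 1) - ψ k : ℕ) : ℝ) * (1 / 2) ^ k := by
        apply mul_le_mul_of_nonneg_right hc; positivity

lemma gf_not_summable (hm : StrictMono ψ) (hgap : ∀ k, ψ k + 2 ^ k ≤ ψ (k + 1)) :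
    ¬ Summable (gf ψ) := by
  intro hs
  have hscum : ∀ K : ℕ, (K : ℝ) ≤ ∑ n ∈ Finset.Ico (ψ 0) (ψ K), gf ψ n := by
    intro K
    induction K with
    | zero => simp
    | succ K ih =>
      rw [← Finset.sum_Ico_consecutive (gf ψ) (hm.monotone (Nat.zero_le K))
        (hm.monotone (Nat.le_succ K))]
      push_cast
      have := gf_block_sum hm hgap K
      linarith
  obtain ⟨K, hK⟩ := exists_nat_gt (∑' n, gf ψ n)
  have hle : ∑ n ∈ Finset.Ico (ψ 0) (ψ K), gf ψ n ≤ ∑' n, gf ψ n :=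
    Summable.sum_le_tsum _ (fun n _ => (gf_pos n).le) hs
  linarith [hscum K]

end KfLemmas

theorem Bcentr (D : Set (Set (Set ℕ)))
    (hD : ∀ I ∈ D, ∃ h : ℕ → ℝ, SummableTall h ∧ I = Ig h)
    (hcard : Cardinal.mk ↥D < bddNum) :
    ∃ g : ℕ → ℝ, SummableTall g ∧ ∀ I ∈ D, Ig g ⊆ I := by
  classical
  choose hfun htall hIeq using hD
  -- the rate functions
  have key : ∀ (I : Set (Set ℕ)) (hI : I ∈ D) (k : ℕ),
      ∃ N : ℕ, ∀ n ≥ N, hfun I hI n ≤ (1 / 2 : ℝ) ^ k := by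
    intro I hI k
    have ht := (htall I hI).2.2
    have : ∀ᶠ n in atTop, hfun I hI n < (1 / 2 : ℝ) ^ k :=
      ht.eventually_lt_const (by positivity)
    obtain ⟨N, hN⟩ := eventually_atTop.mp this
    exact ⟨N, fun n hn => (hN n hn).le⟩
  choose f hf using key
  -- bound the rate functions
  obtain ⟨φ, hφ⟩ := bounded_of_lt_bddNum (fun I : ↥D => f I.1 I.2) hcard
  set ψ := psiAux φ with hψ
  have hm : StrictMono ψ := psiAux_strictMono φ
  have hgap : ∀ k, ψ k + 2 ^ k ≤ ψ (k + 1) := psiAux_gap φ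
  refine ⟨gf ψ, ⟨fun n => gf_pos n, gf_not_summable hm hgap, gf_tendsto hm⟩, ?_⟩
  intro I hI A hA
  -- hA : Summable (A.indicator (gf ψ))
  rw [hIeq I hI]
  -- find k0 with f I k ≤ φ k ≤ ψ k for k ≥ k0
  obtain ⟨k0, hk0⟩ := eventually_atTop.mp (hφ ⟨I, hI⟩)
  -- domination: for n ≥ ψ k0, hfun I hI n ≤ gf ψ n
  have hdom : ∀ n ≥ ψ k0, hfun I hI n ≤ gf ψ n := by
    intro n hn
    have h0n : ψ 0 ≤ n := le_trans (hm.monotone (Nat.zero_le k0)) hn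
    have hKn : k0 ≤ Kf ψ n := le_Kf hm hn
    have hsp : ψ (Kf ψ n) ≤ n := Kf_spec hm h0n
    have hfle : f I hI (Kf ψ n) ≤ ψ (Kf ψ n) :=
      le_trans (hk0 _ hKn) (psiAux_ge φ _)
    exact hf I hI (Kf ψ n) n (le_trans hfle hsp)
  -- comparison
  have hpos := (htall I hI).1
  set N := ψ k0
  have h1 : Summable (fun n => A.indicator (gf ψ) (n + N)) :=
    (summable_nat_add_iff N).2 hA
  have h2 : Summable (fun n => A.indicator (hfun I hI) (n + N)) := by
    apply Summable.of_nonneg_of_le _ _ h1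
    · intro n
      exact Set.indicator_nonneg (fun m _ => (hpos m).le) _
    · intro n
      by_cases hmem : (n + N) ∈ A
      · simp only [Set.indicator_of_mem hmem]
        exact hdom (n + N) (Nat.le_add_left N n)
      · simp [Set.indicator_of_notMem hmem]
  exact (summable_nat_add_iff N).1 h2
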